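/- Let r : ℝ → ℝ be bounded, continuously differentiable, strictly increasing, and satisfy s·r(s) ≥ 0 for all s ∈ ℝ, and let κ > 0. Then for every c₀ ≥ 0 there exists a unique twice continuously differentiable function c : [0,∞) → ℝ with κ·c''(z) = r(c(z)) for all z ≥ 0, c(0) = c₀ and c'(0) = 0. Moreover c and c' are nondecreasing on [0,∞) (in particular c(z) ≥ c₀ ≥ 0 and c'(z) ≥ 0 for all z ≥ 0), and for c₀ = 0 the solution is identically zero. -/

import Mathlib

open Set MeasureTheory intervalIntegral Filter

/-- `c` (with derivative `c'` and second derivative `c''`) solves the initial value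
problem `κ·c'' = r(c)` on `[0,∞)` with `c(0) = c₀`, `c'(0) = 0`. -/
def SolvesIVP (κ : ℝ) (r : ℝ → ℝ) (c₀ : ℝ) (c c' c'' : ℝ → ℝ) : Prop :=
  (∀ z ∈ Ici (0:ℝ), HasDerivWithinAt c (c' z) (Ici (0:ℝ)) z) ∧
  (∀ z ∈ Ici (0:ℝ), HasDerivWithinAt c' (c'' z) (Ici (0:ℝ)) z) ∧
  ContinuousOn c'' (Ici (0:ℝ)) ∧
  (∀ z ∈ Ici (0:ℝ), κ * c'' z = r (c z)) ∧
  c 0 = c₀ ∧ c' 0 = 0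

open Metric
open scoped NNReal

namespace IVPAux

variable {κ : ℝ} {r : ℝ → ℝ}

noncomputable def vf (κ : ℝ) (r : ℝ → ℝ) : ℝ × ℝ → ℝ × ℝ := fun y => (y.2, r y.1 / κ)

lemma r_zero (hr : ContDiff ℝ 1 r) (hrsign : ∀ s, 0 ≤ s * r s) : r 0 = 0 := by
  have h1 : ∀ s < (0:ℝ), r s ≤ 0 := by
    intro s hs; by_contra h; push_neg at h; nlinarith [hrsign s]
  have h2 : ∀ s > (0:ℝ), 0 ≤ r s := by
    intro s hs; by_contra h; push_neg at h; nlinarith [hrsign s]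
  have hcont : Continuous r := hr.continuous
  have hle : r 0 ≤ 0 := by
    have ht : Tendsto r (nhdsWithin 0 (Iio (0:ℝ))) (nhds (r 0)) :=
      (hcont.tendsto 0).mono_left nhdsWithin_le_nhds
    refine le_of_tendsto ht ?_
    filter_upwards [self_mem_nhdsWithin] with s hs
    exact h1 s hs
  have hge : 0 ≤ r 0 := by
    have ht : Tendsto r (nhdsWithin 0 (Ioi (0:ℝ))) (nhds (r 0)) :=
      (hcont.tendsto 0).mono_left nhdsWithin_le_nhds
    refine ge_of_tendsto ht ?_
    filter_upwards [self_mem_nhdsWithin] with s hs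
    exact h2 s hs
  linarith

lemma rlip (hr : ContDiff ℝ 1 r) (X : ℝ) : ∃ K : ℝ≥0, LipschitzOnWith K r (Icc (-X) X) := by
  obtain ⟨M, hM⟩ := isCompact_Icc.exists_bound_of_continuousOn
    ((hr.continuous_deriv le_rfl).continuousOn (s := Icc (-X) X))
  refine ⟨M.toNNReal, ?_⟩
  refine Convex.lipschitzOnWith_of_nnnorm_deriv_le
    (fun x _ => (hr.differentiable one_ne_zero).differentiableAt) ?_ (convex_Icc _ _)
  intro x hx
  have := hM x hx
  rw [← NNReal.coe_le_coe]
  simp only [coe_nnnorm, Real.coe_toNNReal']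
  exact le_max_of_le_left this

lemma vflip (hκ : 0 < κ) (hr : ContDiff ℝ 1 r) (M : ℝ) :
    ∃ C : ℝ≥0, LipschitzOnWith C (vf κ r) (closedBall (0 : ℝ × ℝ) M) := by
  obtain ⟨K, hK⟩ := rlip hr (|M|)
  refine ⟨max 1 (K / κ.toNNReal), ?_⟩
  rw [lipschitzOnWith_iff_dist_le_mul]
  intro y hy z hz
  have hcoe : ((max 1 (K / κ.toNNReal) : ℝ≥0) : ℝ) = max 1 ((K:ℝ) / κ) := by
    rw [NNReal.coe_max, NNReal.coe_one, NNReal.coe_div, Real.coe_toNNReal _ hκ.le]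
  have hy1 : y.1 ∈ Icc (-|M|) (|M|) :=
    abs_le.1 (((norm_fst_le y).trans (mem_closedBall_zero_iff.1 hy)).trans (le_abs_self M))
  have hz1 : z.1 ∈ Icc (-|M|) (|M|) :=
    abs_le.1 (((norm_fst_le z).trans (mem_closedBall_zero_iff.1 hz)).trans (le_abs_self M))
  have hd1 : dist y.1 z.1 ≤ dist y z := le_max_left _ _
  have hd2 : dist y.2 z.2 ≤ dist y z := le_max_right _ _
  have hrd : dist (r y.1) (r z.1) ≤ (K : ℝ) * dist y.1 z.1 :=
    (lipschitzOnWith_iff_dist_le_mul.1 hK) _ hy1 _ hz1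
  rw [Prod.dist_eq (x := vf κ r y), hcoe]
  refine max_le ?_ ?_
  · calc dist (vf κ r y).1 (vf κ r z).1 = dist y.2 z.2 := rfl
      _ ≤ dist y z := hd2
      _ ≤ max 1 ((K:ℝ)/κ) * dist y z :=
        le_mul_of_one_le_left dist_nonneg (le_max_left _ _)
  · have heq : dist (vf κ r y).2 (vf κ r z).2 = dist (r y.1) (r z.1) / κ := by
      simp only [vf, Real.dist_eq]
      rw [← sub_div, abs_div, abs_of_pos hκ]
    calc dist (vf κ r y).2 (vf κ r z).2 = dist (r y.1) (r z.1) / κ := heq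
      _ ≤ ((K:ℝ) * dist y.1 z.1) / κ := by gcongr
      _ = ((K:ℝ)/κ) * dist y.1 z.1 := by ring
      _ ≤ ((K:ℝ)/κ) * dist y z := by gcongr
      _ ≤ max 1 ((K:ℝ)/κ) * dist y z :=
        mul_le_mul_of_nonneg_right (le_max_right _ _) dist_nonneg

lemma uniq_pair (hκ : 0 < κ) (hr : ContDiff ℝ 1 r) {f g : ℝ → ℝ × ℝ} {b : ℝ}
    (hfc : ContinuousOn f (Icc 0 b))
    (hf : ∀ t ∈ Ico 0 b, HasDerivWithinAt f (vf κ r (f t)) (Ici t) t)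
    (hgc : ContinuousOn g (Icc 0 b))
    (hg : ∀ t ∈ Ico 0 b, HasDerivWithinAt g (vf κ r (g t)) (Ici t) t)
    (h0 : f 0 = g 0) : EqOn f g (Icc 0 b) := by
  rcases le_or_gt b 0 with hb | hb
  · intro t ht
    have : t = 0 := le_antisymm (ht.2.trans hb) ht.1
    rw [this, h0]
  obtain ⟨M₁, hM₁⟩ := (isCompact_Icc (a := (0:ℝ)) (b := b)).exists_bound_of_continuousOn hfc
  obtain ⟨M₂, hM₂⟩ := (isCompact_Icc (a := (0:ℝ)) (b := b)).exists_bound_of_continuousOn hgc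
  obtain ⟨C, hC⟩ := vflip hκ hr (max M₁ M₂)
  exact ODE_solution_unique_of_mem_Icc_right
    (fun _ _ => hC) hfc hf
    (fun t ht => mem_closedBall_zero_iff.2 ((hM₁ t (Ico_subset_Icc_self ht)).trans (le_max_left _ _)))
    hgc hg
    (fun t ht => mem_closedBall_zero_iff.2 ((hM₂ t (Ico_subset_Icc_self ht)).trans (le_max_right _ _)))
    h0

/-- clamp to [-a, a] -/
noncomputable def clamp (a x : ℝ) : ℝ := max (min x a) (-a)

lemma clamp_lipschitz (a : ℝ) : LipschitzWith 1 (clamp a) :=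
  (LipschitzWith.id.min_const a).max_const (-a)

lemma abs_clamp_le {a : ℝ} (ha : 0 ≤ a) (x : ℝ) : |clamp a x| ≤ a := by
  rw [abs_le]
  constructor
  · exact le_max_right _ _
  · exact max_le (min_le_right _ _) (by linarith)

lemma clamp_eq {a x : ℝ} (hx : |x| ≤ a) : clamp a x = x := by
  rw [abs_le] at hx
  rw [clamp, min_eq_left hx.2, max_eq_left hx.1]

lemma clamp_mem {a : ℝ} (ha : 0 ≤ a) (x : ℝ) : clamp a x ∈ Icc (-a) a :=
  abs_le.1 (abs_clamp_le ha x)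

lemma exists_on (hκ : 0 < κ) {B : ℝ} (hrb : ∀ s, |r s| ≤ B) (hr : ContDiff ℝ 1 r)
    (c₀ : ℝ) {T : ℝ} (hT : 0 < T) :
    ∃ f : ℝ → ℝ × ℝ, f 0 = (c₀, 0) ∧
      ∀ t ∈ Icc 0 T, HasDerivWithinAt f (vf κ r (f t)) (Icc 0 T) t := by
  have hB0 : 0 ≤ B := (abs_nonneg _).trans (hrb 0)
  set P : ℝ := B * T / κ + 1 with hP
  have hP0 : 0 < P := by positivity
  set X : ℝ := |c₀| + P * T + 1 with hX
  have hX0 : 0 < X := by positivity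
  obtain ⟨K, hK⟩ := rlip hr X
  -- truncated field
  set w : ℝ × ℝ → ℝ × ℝ := fun y => (clamp P y.2, r (clamp X y.1) / κ) with hw
  -- global Lipschitz bound for w
  have hwlip : ∀ y z : ℝ × ℝ, dist (w y) (w z) ≤ (max 1 ((K:ℝ)/κ)) * dist y z := by
    intro y z
    have hd1 : dist y.1 z.1 ≤ dist y z := le_max_left _ _
    have hd2 : dist y.2 z.2 ≤ dist y z := le_max_right _ _
    rw [Prod.dist_eq (x := w y)]
    refine max_le ?_ ?_
    · calc dist (w y).1 (w z).1 ≤ 1 * dist y.2 z.2 := by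
            simpa using (clamp_lipschitz P).dist_le_mul y.2 z.2
        _ ≤ dist y z := by rw [one_mul]; exact hd2
        _ ≤ max 1 ((K:ℝ)/κ) * dist y z := le_mul_of_one_le_left dist_nonneg (le_max_left _ _)
    · have heq : dist (w y).2 (w z).2 = dist (r (clamp X y.1)) (r (clamp X z.1)) / κ := by
        simp only [hw, Real.dist_eq]
        rw [← sub_div, abs_div, abs_of_pos hκ]
      have hrd : dist (r (clamp X y.1)) (r (clamp X z.1)) ≤ (K:ℝ) * dist (clamp X y.1) (clamp X z.1) :=
        (lipschitzOnWith_iff_dist_le_mul.1 hK) _ (clamp_mem hX0.le _) _ (clamp_mem hX0.le _)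
      have hcl : dist (clamp X y.1) (clamp X z.1) ≤ dist y.1 z.1 := by
        simpa using (clamp_lipschitz X).dist_le_mul y.1 z.1
      calc dist (w y).2 (w z).2 = dist (r (clamp X y.1)) (r (clamp X z.1)) / κ := heq
        _ ≤ ((K:ℝ) * dist (clamp X y.1) (clamp X z.1)) / κ := by gcongr
        _ ≤ ((K:ℝ) * dist y.1 z.1) / κ := by gcongr
        _ = ((K:ℝ)/κ) * dist y.1 z.1 := by ring
        _ ≤ ((K:ℝ)/κ) * dist y z := by gcongr
        _ ≤ max 1 ((K:ℝ)/κ) * dist y z := mul_le_mul_of_nonneg_right (le_max_right _ _) dist_nonneg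
  set C : ℝ≥0 := max 1 (K / κ.toNNReal) with hC
  have hCcoe : (C : ℝ) = max 1 ((K:ℝ)/κ) := by
    rw [hC, NNReal.coe_max, NNReal.coe_one, NNReal.coe_div, Real.coe_toNNReal _ hκ.le]
  set Cb : ℝ := max P (B / κ) with hCb
  have hCb0 : 0 ≤ Cb := le_trans hP0.le (le_max_left _ _)
  have hwb : ∀ y : ℝ × ℝ, ‖w y‖ ≤ Cb := by
    intro y
    rw [Prod.norm_def]
    refine max_le ?_ ?_
    · exact le_trans (abs_clamp_le hP0.le _) (le_max_left _ _)
    · rw [Real.norm_eq_abs, abs_div, abs_of_pos hκ]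
      exact le_trans (by gcongr; exact hrb _) (le_max_right _ _)
  have hT0 : (0:ℝ) ∈ Icc 0 T := ⟨le_rfl, hT.le⟩
  have hpl : IsPicardLindelof (fun _ : ℝ => w) (⟨0, hT0⟩ : Icc (0:ℝ) T) (c₀, 0)
      (Cb * T).toNNReal 0 Cb.toNNReal C := by
    constructor
    · intro t _
      refine LipschitzOnWith.mono ?_ (subset_univ _)
      rw [lipschitzOnWith_iff_dist_le_mul]
      intro y _ z _
      rw [hCcoe]
      exact hwlip y z
    · intro x _
      exact continuousOn_const
    · intro t _ x _
      rw [Real.coe_toNNReal _ hCb0]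
      exact hwb x
    · show (Cb.toNNReal:ℝ) * max (T - 0) (0 - 0) ≤ ((Cb*T).toNNReal:ℝ) - ((0:ℝ≥0):ℝ)
      rw [Real.coe_toNNReal _ hCb0, Real.coe_toNNReal _ (by positivity), NNReal.coe_zero]
      rw [sub_zero, sub_zero, sub_zero, max_eq_left hT.le]
  obtain ⟨f, hf0, hfd⟩ := hpl.exists_eq_forall_mem_Icc_hasDerivWithinAt₀
  replace hf0 : f 0 = (c₀, 0) := hf0
  -- component derivatives
  have hp : ∀ t ∈ Icc (0:ℝ) T,
      HasDerivWithinAt (fun s => (f s).2) (r (clamp X (f t).1) / κ) (Icc 0 T) t := by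
    intro t ht
    exact (ContinuousLinearMap.snd ℝ ℝ ℝ).hasFDerivAt.comp_hasDerivWithinAt t (hfd t ht)
  have hpbound : ∀ t ∈ Icc (0:ℝ) T, |(f t).2| ≤ B / κ * T := by
    intro t ht
    have := norm_image_sub_le_of_norm_deriv_le_segment' hp
      (fun x _ => by
        rw [Real.norm_eq_abs, abs_div, abs_of_pos hκ]
        exact (div_le_div_iff_of_pos_right hκ).2 (hrb _)) t ht
    rw [hf0] at this
    simp only [Real.norm_eq_abs, sub_zero] at this
    calc |(f t).2| ≤ B / κ * t := this
      _ ≤ B / κ * T := mul_le_mul_of_nonneg_left ht.2 (by positivity)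
  have hsat : ∀ t ∈ Icc (0:ℝ) T, clamp P (f t).2 = (f t).2 := by
    intro t ht
    refine clamp_eq ((hpbound t ht).trans ?_)
    rw [hP]
    have : B / κ * T = B * T / κ := by ring
    rw [this]; linarith
  have hx : ∀ t ∈ Icc (0:ℝ) T,
      HasDerivWithinAt (fun s => (f s).1) (clamp P (f t).2) (Icc 0 T) t := by
    intro t ht
    exact (ContinuousLinearMap.fst ℝ ℝ ℝ).hasFDerivAt.comp_hasDerivWithinAt t (hfd t ht)
  have hxbound : ∀ t ∈ Icc (0:ℝ) T, |(f t).1| ≤ |c₀| + P * T := by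
    intro t ht
    have := norm_image_sub_le_of_norm_deriv_le_segment' hx
      (fun x hx' => by
        rw [Real.norm_eq_abs]
        exact abs_clamp_le hP0.le _) t ht
    rw [hf0] at this
    simp only [Real.norm_eq_abs] at this
    have h2 : |(f t).1 - c₀| ≤ P * T := by
      calc |(f t).1 - c₀| ≤ P * (t - 0) := this
        _ ≤ P * T := by
            rw [sub_zero]
            exact mul_le_mul_of_nonneg_left ht.2 hP0.le
    calc |(f t).1| = |c₀ + ((f t).1 - c₀)| := by ring_nf
      _ ≤ |c₀| + |(f t).1 - c₀| := abs_add_le _ _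
      _ ≤ |c₀| + P * T := by linarith
  have hclX : ∀ t ∈ Icc (0:ℝ) T, clamp X (f t).1 = (f t).1 := by
    intro t ht
    refine clamp_eq ((hxbound t ht).trans ?_)
    rw [hX]; linarith
  refine ⟨f, hf0, fun t ht => ?_⟩
  have := hfd t ht
  have heq : w (f t) = vf κ r (f t) := by
    simp only [hw, vf, Prod.mk.injEq]
    exact ⟨hsat t ht, by rw [hclX t ht]⟩
  rwa [heq] at this

lemma exists_sol (hκ : 0 < κ) {B : ℝ} (hrb : ∀ s, |r s| ≤ B) (hr : ContDiff ℝ 1 r)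
    (c₀ : ℝ) : ∃ c c' c'' : ℝ → ℝ, SolvesIVP κ r c₀ c c' c'' := by
  have hF : ∀ n : ℕ, ∃ f : ℝ → ℝ × ℝ, f 0 = (c₀, 0) ∧
      ∀ t ∈ Icc 0 ((n:ℝ)+1), HasDerivWithinAt f (vf κ r (f t)) (Icc 0 ((n:ℝ)+1)) t :=
    fun n => exists_on hκ hrb hr c₀ (by positivity)
  set F : ℕ → ℝ → ℝ × ℝ := fun n => (hF n).choose with hFdef
  have hF0 : ∀ n : ℕ, F n 0 = (c₀, 0) := fun n => (hF n).choose_spec.1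
  have hFd : ∀ n : ℕ, ∀ t ∈ Icc (0:ℝ) ((n:ℝ)+1),
      HasDerivWithinAt (F n) (vf κ r (F n t)) (Icc 0 ((n:ℝ)+1)) t :=
    fun n => (hF n).choose_spec.2
  have hFc : ∀ n : ℕ, ContinuousOn (F n) (Icc 0 ((n:ℝ)+1)) :=
    fun n t ht => ((hFd n) t ht).continuousWithinAt
  have derivIci : ∀ n : ℕ, ∀ t ∈ Ico (0:ℝ) ((n:ℝ)+1),
      HasDerivWithinAt (F n) (vf κ r (F n t)) (Ici t) t :=
    fun n t ht => (hFd n t (Ico_subset_Icc_self ht)).mono_of_mem_nhdsWithin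
      (Icc_mem_nhdsGE_of_mem ht)
  have compat : ∀ m n : ℕ, m ≤ n → EqOn (F m) (F n) (Icc 0 ((m:ℝ)+1)) := by
    intro m n hmn
    have hsub : Icc (0:ℝ) ((m:ℝ)+1) ⊆ Icc 0 ((n:ℝ)+1) :=
      Icc_subset_Icc le_rfl (by exact_mod_cast add_le_add_left (Nat.cast_le.2 hmn) 1)
    refine uniq_pair hκ hr (hFc m) (derivIci m) ((hFc n).mono hsub) ?_ ?_
    · intro t ht
      exact derivIci n t ⟨ht.1, lt_of_lt_of_le ht.2
        (by exact_mod_cast add_le_add_left (Nat.cast_le.2 hmn) 1)⟩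
    · rw [hF0, hF0]
  have agree : ∀ n : ℕ, ∀ z ∈ Icc (0:ℝ) ((n:ℝ)+1), F (Nat.floor z) z = F n z := by
    intro n z hz
    have hz1 : z ∈ Icc (0:ℝ) ((Nat.floor z : ℝ)+1) := ⟨hz.1, (Nat.lt_floor_add_one z).le⟩
    rcases le_total (Nat.floor z) n with h | h
    · exact compat _ n h hz1
    · exact (compat n _ h hz).symm
  set g : ℝ → ℝ × ℝ := fun y => F (Nat.floor y) y with hgdef
  have key : ∀ z ∈ Ici (0:ℝ), HasDerivWithinAt g (vf κ r (g z)) (Ici 0) z := by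
    intro z hz
    set n := Nat.floor z with hn
    have hlt : z < (n:ℝ) + 1 := Nat.lt_floor_add_one z
    have hzIcc : z ∈ Icc (0:ℝ) ((n:ℝ)+1) := ⟨hz, hlt.le⟩
    have hmem : Icc (0:ℝ) ((n:ℝ)+1) ∈ nhdsWithin z (Ici 0) := by
      have : Ici (0:ℝ) ∩ Iic ((n:ℝ)+1) ∈ nhdsWithin z (Ici 0) :=
        Filter.inter_mem self_mem_nhdsWithin (mem_nhdsWithin_of_mem_nhds (Iic_mem_nhds hlt))
      rwa [Ici_inter_Iic] at this
    have hF' : HasDerivWithinAt (F n) (vf κ r (F n z)) (Ici 0) z :=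
      (hFd n z hzIcc).mono_of_mem_nhdsWithin hmem
    have hev : g =ᶠ[nhdsWithin z (Ici 0)] F n := by
      filter_upwards [hmem] with y hy
      exact agree n y hy
    have := hF'.congr_of_eventuallyEq hev (agree n z hzIcc)
    rwa [show g z = F n z from agree n z hzIcc]
  refine ⟨fun z => (g z).1, fun z => (g z).2, fun z => r ((g z).1) / κ, ?_, ?_, ?_, ?_, ?_, ?_⟩
  · intro z hz
    exact (ContinuousLinearMap.fst ℝ ℝ ℝ).hasFDerivAt.comp_hasDerivWithinAt z (key z hz)
  · intro z hz
    exact (ContinuousLinearMap.snd ℝ ℝ ℝ).hasFDerivAt.comp_hasDerivWithinAt z (key z hz)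
  · have hcC : ContinuousOn (fun z => (g z).1) (Ici (0:ℝ)) := fun z hz =>
      ((ContinuousLinearMap.fst ℝ ℝ ℝ).hasFDerivAt.comp_hasDerivWithinAt z
        (key z hz)).continuousWithinAt
    exact (hr.continuous.comp_continuousOn hcC).div_const κ
  · intro z hz
    field_simp
  · show (F (Nat.floor (0:ℝ)) 0).1 = c₀
    rw [Nat.floor_zero, hF0]
  · show (F (Nat.floor (0:ℝ)) 0).2 = 0
    rw [Nat.floor_zero, hF0]

lemma sign_lemma (hκ : 0 < κ) (hrmono : StrictMono r) (hr0 : r 0 = 0)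
    {c₀ : ℝ} (hc₀ : 0 < c₀) {c c' c'' : ℝ → ℝ}
    (hsol : SolvesIVP κ r c₀ c c' c'') : ∀ z ∈ Ici (0:ℝ), 0 ≤ c' z := by
  obtain ⟨hc, hc', hcont'', heqn, h00, h0'⟩ := hsol
  by_contra hcon
  push_neg at hcon
  obtain ⟨z₀, hz₀, hz₀'⟩ := hcon
  set S := {z : ℝ | 0 ≤ z ∧ c' z < 0} with hSdef
  have hSne : S.Nonempty := ⟨z₀, hz₀, hz₀'⟩
  have hSbdd : BddBelow S := ⟨0, fun z hz => hz.1⟩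
  set h := sInf S with hhdef
  have hh0 : 0 ≤ h := le_csInf hSne fun z hz => hz.1
  have hle : ∀ z, 0 ≤ z → z < h → 0 ≤ c' z := by
    intro z hz hzh
    by_contra hneg
    push_neg at hneg
    exact absurd (csInf_le hSbdd ⟨hz, hneg⟩) (not_le.2 hzh)
  have hcw : ContinuousWithinAt c' (Ici 0) h := (hc' h hh0).continuousWithinAt
  have hch_le : c' h ≤ 0 := by
    by_contra hpos
    push_neg at hpos
    obtain ⟨δ, hδ, hδ'⟩ := Metric.continuousWithinAt_iff.1 hcw (c' h) hpos
    obtain ⟨z, hzS, hzlt⟩ := exists_lt_of_csInf_lt hSne (show h < h + δ by linarith)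
    have hzge : h ≤ z := csInf_le hSbdd hzS
    have hd : dist z h < δ := by
      rw [Real.dist_eq, abs_of_nonneg (by linarith)]; linarith
    have := abs_lt.1 (by rw [← Real.dist_eq]; exact hδ' hzS.1 hd)
    linarith [hzS.2]
  have hch : c' h = 0 := by
    refine le_antisymm hch_le ?_
    rcases eq_or_lt_of_le hh0 with heq | hlt
    · rw [← heq, h0']
    · by_contra hneg
      push_neg at hneg
      obtain ⟨δ, hδ, hδ'⟩ := Metric.continuousWithinAt_iff.1 hcw (-(c' h)) (by linarith)
      set z := max (h - δ/2) 0 with hzdef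
      have hz0 : (0:ℝ) ≤ z := le_max_right _ _
      have hzh : z < h := max_lt (by linarith) hlt
      have hzge : h - δ/2 ≤ z := le_max_left _ _
      have hd : dist z h < δ := by
        rw [Real.dist_eq, abs_of_nonpos (by linarith)]; linarith
      have := abs_lt.1 (by rw [← Real.dist_eq]; exact hδ' hz0 hd)
      have := hle z hz0 hzh
      linarith
  have hmono : MonotoneOn c (Icc 0 h) := by
    refine monotoneOn_of_hasDerivWithinAt_nonneg (f' := c') (convex_Icc _ _) ?_ ?_ ?_
    · exact fun t ht => (hc t ht.1).continuousWithinAt.mono fun y hy => hy.1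
    · intro x hx
      rw [interior_Icc] at hx
      exact (hc x hx.1.le).mono (by rw [interior_Icc]; exact fun y hy => hy.1.le)
    · intro x hx
      rw [interior_Icc] at hx
      exact hle x hx.1.le hx.2
  have hch_ge : c₀ ≤ c h := by
    have := hmono (left_mem_Icc.2 hh0) (right_mem_Icc.2 hh0) hh0
    rwa [h00] at this
  have hcpp : 0 < c'' h := by
    have h1 : κ * c'' h = r (c h) := heqn h hh0
    have h2 : 0 < r (c h) := by
      calc (0:ℝ) = r 0 := hr0.symm
        _ < r c₀ := hrmono hc₀
        _ ≤ r (c h) := hrmono.monotone hch_ge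
    nlinarith
  obtain ⟨δ, hδ, hδ'⟩ := Metric.continuousWithinAt_iff.1 (hcont'' h hh0) (c'' h) hcpp
  have hpos'' : ∀ x, 0 ≤ x → dist x h < δ → 0 < c'' x := by
    intro x hx hd
    have := abs_lt.1 (by rw [← Real.dist_eq]; exact hδ' hx hd)
    linarith
  have hsm : StrictMonoOn c' (Icc h (h + δ/2)) := by
    refine strictMonoOn_of_hasDerivWithinAt_pos (f' := c'') (convex_Icc _ _) ?_ ?_ ?_
    · exact fun t ht => (hc' t (hh0.trans ht.1)).continuousWithinAt.mono
        fun y hy => hh0.trans hy.1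
    · intro x hx
      rw [interior_Icc] at hx
      exact (hc' x (hh0.trans hx.1.le)).mono
        (by rw [interior_Icc]; exact fun y hy => hh0.trans hy.1.le)
    · intro x hx
      rw [interior_Icc] at hx
      refine hpos'' x (hh0.trans hx.1.le) ?_
      rw [Real.dist_eq, abs_of_nonneg (by linarith [hx.1])]
      linarith [hx.2]
  obtain ⟨z, hzS, hzlt⟩ := exists_lt_of_csInf_lt hSne (show h < h + δ/2 by linarith)
  have hzge : h ≤ z := csInf_le hSbdd hzS
  have hzne : h < z := lt_of_le_of_ne hzge (by rintro rfl; linarith [hzS.2, hch])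
  have := hsm (left_mem_Icc.2 (by linarith)) ⟨hzge, hzlt.le⟩ hzne
  rw [hch] at this
  linarith [hzS.2]

lemma corollaries (hκ : 0 < κ) (hrmono : StrictMono r) (hr0 : r 0 = 0)
    {c₀ : ℝ} (hc₀ : 0 ≤ c₀) {c c' c'' : ℝ → ℝ}
    (hsol : SolvesIVP κ r c₀ c c' c'') (hsign : ∀ z ∈ Ici (0:ℝ), 0 ≤ c' z) :
    MonotoneOn c (Ici (0:ℝ)) ∧ MonotoneOn c' (Ici (0:ℝ)) ∧
      ∀ z ∈ Ici (0:ℝ), c₀ ≤ c z ∧ 0 ≤ c' z := by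
  obtain ⟨hc, hc', hcont'', heqn, h00, h0'⟩ := hsol
  have hmc : MonotoneOn c (Ici (0:ℝ)) := by
    refine monotoneOn_of_hasDerivWithinAt_nonneg (f' := c') (convex_Ici _) ?_ ?_ ?_
    · exact fun t ht => (hc t ht).continuousWithinAt
    · intro x hx
      rw [interior_Ici] at hx
      exact (hc x (mem_Ici.2 hx.le)).mono (by rw [interior_Ici]; exact Ioi_subset_Ici_self)
    · intro x hx
      rw [interior_Ici] at hx
      exact hsign x (mem_Ici.2 hx.le)
  have hge : ∀ z ∈ Ici (0:ℝ), c₀ ≤ c z := by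
    intro z hz
    have := hmc self_mem_Ici hz hz
    rwa [h00] at this
  have hpp : ∀ z ∈ Ici (0:ℝ), 0 ≤ c'' z := by
    intro z hz
    have h1 : κ * c'' z = r (c z) := heqn z hz
    have h2 : 0 ≤ r (c z) := by
      calc (0:ℝ) = r 0 := hr0.symm
        _ ≤ r (c z) := hrmono.monotone (hc₀.trans (hge z hz))
    nlinarith
  have hmc' : MonotoneOn c' (Ici (0:ℝ)) := by
    refine monotoneOn_of_hasDerivWithinAt_nonneg (f' := c'') (convex_Ici _) ?_ ?_ ?_
    · exact fun t ht => (hc' t ht).continuousWithinAt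
    · intro x hx
      rw [interior_Ici] at hx
      exact (hc' x (mem_Ici.2 hx.le)).mono (by rw [interior_Ici]; exact Ioi_subset_Ici_self)
    · intro x hx
      rw [interior_Ici] at hx
      exact hpp x (mem_Ici.2 hx.le)
  exact ⟨hmc, hmc', fun z hz => ⟨hge z hz, hsign z hz⟩⟩

lemma zero_sol (hκ : 0 < κ) (hr0 : r 0 = 0) :
    SolvesIVP κ r 0 (fun _ => 0) (fun _ => 0) (fun _ => 0) :=
  ⟨fun z _ => hasDerivWithinAt_const _ _ _, fun z _ => hasDerivWithinAt_const _ _ _,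
    continuousOn_const, fun z _ => by rw [hr0]; ring, rfl, rfl⟩

end IVPAux

theorem IVP_existence_uniqueness_monotone
    (κ : ℝ) (hκ : 0 < κ)
    (r : ℝ → ℝ) (hrb : ∃ B : ℝ, ∀ s : ℝ, |r s| ≤ B)
    (hr : ContDiff ℝ 1 r) (hrmono : StrictMono r)
    (hrsign : ∀ s : ℝ, 0 ≤ s * r s)
    (c₀ : ℝ) (hc₀ : 0 ≤ c₀) :
    (∃ c c' c'' : ℝ → ℝ, SolvesIVP κ r c₀ c c' c'' ∧
      MonotoneOn c (Ici (0:ℝ)) ∧ MonotoneOn c' (Ici (0:ℝ)) ∧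
      (∀ z ∈ Ici (0:ℝ), c₀ ≤ c z ∧ 0 ≤ c' z) ∧
      (c₀ = 0 → ∀ z ∈ Ici (0:ℝ), c z = 0)) ∧
    (∀ c₁ c₁' c₁'' c₂ c₂' c₂'' : ℝ → ℝ,
      SolvesIVP κ r c₀ c₁ c₁' c₁'' → SolvesIVP κ r c₀ c₂ c₂' c₂'' →
      EqOn c₁ c₂ (Ici (0:ℝ))) := by
  obtain ⟨B, hrb⟩ := hrb
  have hr0 : r 0 = 0 := IVPAux.r_zero hr hrsign
  constructor
  · rcases eq_or_lt_of_le hc₀ with heq | hpos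
    · refine ⟨fun _ => 0, fun _ => 0, fun _ => 0,
        by rw [← heq]; exact IVPAux.zero_sol hκ hr0, ?_, ?_, ?_, ?_⟩
      · exact monotoneOn_const
      · exact monotoneOn_const
      · exact fun z _ => ⟨heq.ge, le_rfl⟩
      · exact fun _ z _ => rfl
    · obtain ⟨c, c', c'', hsol⟩ := IVPAux.exists_sol hκ hrb hr c₀
      have hsign := IVPAux.sign_lemma hκ hrmono hr0 hpos hsol
      obtain ⟨hmc, hmc', hb⟩ := IVPAux.corollaries hκ hrmono hr0 hc₀ hsol hsign
      exact ⟨c, c', c'', hsol, hmc, hmc', hb,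
        fun h0 => absurd hpos (by simp [h0])⟩
  · intro c₁ c₁' c₁'' c₂ c₂' c₂'' h₁ h₂ z hz
    obtain ⟨hc₁, hc₁', _, heq₁, h₁0, h₁0'⟩ := h₁
    obtain ⟨hc₂, hc₂', _, heq₂, h₂0, h₂0'⟩ := h₂
    have hfd : ∀ t ∈ Ico (0:ℝ) z, HasDerivWithinAt (fun t => (c₁ t, c₁' t))
        (IVPAux.vf κ r (c₁ t, c₁' t)) (Ici t) t := by
      intro t ht
      have hdd : c₁'' t = r (c₁ t) / κ :=
        (eq_div_iff hκ.ne').2 (by rw [mul_comm]; exact heq₁ t ht.1)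
      have hd := ((hc₁ t ht.1).prodMk (hc₁' t ht.1)).mono (Ici_subset_Ici.2 ht.1)
      rw [hdd] at hd
      exact hd
    have hgd : ∀ t ∈ Ico (0:ℝ) z, HasDerivWithinAt (fun t => (c₂ t, c₂' t))
        (IVPAux.vf κ r (c₂ t, c₂' t)) (Ici t) t := by
      intro t ht
      have hdd : c₂'' t = r (c₂ t) / κ :=
        (eq_div_iff hκ.ne').2 (by rw [mul_comm]; exact heq₂ t ht.1)
      have hd := ((hc₂ t ht.1).prodMk (hc₂' t ht.1)).mono (Ici_subset_Ici.2 ht.1)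
      rw [hdd] at hd
      exact hd
    have hfc : ContinuousOn (fun t => (c₁ t, c₁' t)) (Icc 0 z) := fun t ht =>
      (((hc₁ t ht.1).continuousWithinAt).prodMk
        ((hc₁' t ht.1).continuousWithinAt)).mono fun y hy => hy.1
    have hgc : ContinuousOn (fun t => (c₂ t, c₂' t)) (Icc 0 z) := fun t ht =>
      (((hc₂ t ht.1).continuousWithinAt).prodMk
        ((hc₂' t ht.1).continuousWithinAt)).mono fun y hy => hy.1
    have h0 : (c₁ 0, c₁' 0) = (c₂ 0, c₂' 0) := by rw [h₁0, h₁0', h₂0, h₂0']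
    have := IVPAux.uniq_pair hκ hr hfc hfd hgc hgd h0 ⟨hz, le_rfl⟩
    exact congrArg Prod.fst this
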